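/- Let A and B be d×d positive definite real matrices such that B − A is positive semidefinite, and let D be a d×d positive semidefinite real matrix. Then det(B + D)·det(A) ≤ det(A + D)·det(B); equivalently, det(B + D)/det(B) ≤ det(A + D)/det(A). -/

import Mathlib

open Matrix

section SqrtPort
open scoped MatrixOrder

noncomputable def Matrix.PosSemidef.sqrt {n : Type*} [Fintype n] [DecidableEq n]
    {A : Matrix n n ℝ} (_hA : A.PosSemidef) : Matrix n n ℝ := CFC.sqrt A

lemma Matrix.PosSemidef.sqrt_mul_self {n : Type*} [Fintype n] [DecidableEq n]
    {A : Matrix n n ℝ} (hA : A.PosSemidef) : hA.sqrt * hA.sqrt = A :=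
  CFC.sqrt_mul_sqrt_self A hA.nonneg

lemma Matrix.PosSemidef.posSemidef_sqrt {n : Type*} [Fintype n] [DecidableEq n]
    {A : Matrix n n ℝ} (hA : A.PosSemidef) : hA.sqrt.PosSemidef :=
  (CFC.sqrt_nonneg A).posSemidef

end SqrtPort

private lemma one_le_det_one_add {n : Type*} [Fintype n] [DecidableEq n]
    {F : Matrix n n ℝ} (hF : F.PosSemidef) : 1 ≤ (1 + F).det := by
  have h := hF.1.spectral_theorem
  set U : Matrix n n ℝ := (hF.1.eigenvectorUnitary : Matrix n n ℝ) with hUdef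
  have hU : U * star U = 1 := mem_unitaryGroup_iff.mp hF.1.eigenvectorUnitary.2
  set f : n → ℝ := RCLike.ofReal ∘ hF.1.eigenvalues with hfdef
  have h1 : (1 : Matrix n n ℝ) + F = U * (1 + diagonal f) * star U := by
    rw [mul_add, add_mul, mul_one, hU, h, Unitary.conjStarAlgAut_apply]
  have hdetU : U.det * (star U).det = 1 := by rw [← det_mul, hU, det_one]
  have h2 : ((1 : Matrix n n ℝ) + F).det = (1 + diagonal f).det * (U.det * (star U).det) := by
    rw [h1, det_mul, det_mul]; ring
  rw [hdetU, mul_one] at h2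
  rw [h2, ← diagonal_one, diagonal_add, det_diagonal]
  have hle : (∏ _i : n, (1 : ℝ)) ≤ ∏ i, (1 + f) i := by
    refine Finset.prod_le_prod (fun i _ => zero_le_one) (fun i _ => ?_)
    have := hF.eigenvalues_nonneg i
    simp only [Pi.add_apply, Pi.one_apply, hfdef, Function.comp_apply, RCLike.ofReal_real_eq_id, id_eq]
    linarith
  simpa using hle

private lemma sqrt_det_isUnit {n : Type*} [Fintype n] [DecidableEq n]
    {P : Matrix n n ℝ} (hP : P.PosDef) : IsUnit hP.posSemidef.sqrt.det := by
  have h : hP.posSemidef.sqrt.det * hP.posSemidef.sqrt.det = P.det := by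
    rw [← det_mul, hP.posSemidef.sqrt_mul_self]
  have := hP.det_pos
  refine isUnit_iff_ne_zero.mpr fun h0 => ?_
  rw [h0, mul_zero] at h
  exact absurd h.symm (ne_of_gt this)

/-- Factorization: `det (P + X) = det P * det (1 + R⁻¹ X R⁻¹)` where `R = sqrt P`. -/
private lemma det_add_factor {n : Type*} [Fintype n] [DecidableEq n]
    {P : Matrix n n ℝ} (hP : P.PosDef) (X : Matrix n n ℝ) :
    (P + X).det =
      P.det * (1 + hP.posSemidef.sqrt⁻¹ * X * hP.posSemidef.sqrt⁻¹).det := by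
  set R := hP.posSemidef.sqrt with hRdef
  have hu : IsUnit R.det := sqrt_det_isUnit hP
  have hRR : R * R = P := hP.posSemidef.sqrt_mul_self
  have h1 : P + X = R * (1 + R⁻¹ * X * R⁻¹) * R := by
    rw [mul_add, mul_one, add_mul, hRR]
    congr 1
    symm
    calc R * (R⁻¹ * X * R⁻¹) * R = (R * R⁻¹) * X * (R⁻¹ * R) := by
          simp only [Matrix.mul_assoc]
      _ = X := by rw [mul_nonsing_inv _ hu, nonsing_inv_mul _ hu, one_mul, mul_one]
  rw [h1, det_mul, det_mul]
  have hdP : R.det * R.det = P.det := by rw [← det_mul, hRR]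
  rw [← hdP]; ring

private lemma inv_sqrt_hermitian {n : Type*} [Fintype n] [DecidableEq n]
    {P : Matrix n n ℝ} (hP : P.PosDef) : (hP.posSemidef.sqrt⁻¹).IsHermitian :=
  hP.posSemidef.posSemidef_sqrt.1.inv

/-- Determinant monotonicity: for `P` positive definite and `E` positive semidefinite,
`det P ≤ det (P + E)`. -/
private lemma det_le_det_add {n : Type*} [Fintype n] [DecidableEq n]
    {P E : Matrix n n ℝ} (hP : P.PosDef) (hE : E.PosSemidef) :
    P.det ≤ (P + E).det := by
  rw [det_add_factor hP E]
  set R := hP.posSemidef.sqrt with hRdef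
  have hX : (R⁻¹ * E * R⁻¹).PosSemidef := by
    have := hE.mul_mul_conjTranspose_same R⁻¹
    rwa [(inv_sqrt_hermitian hP).eq] at this
  have h1 : (1 : ℝ) ≤ (1 + R⁻¹ * E * R⁻¹).det := one_le_det_one_add hX
  exact le_mul_of_one_le_right hP.det_pos.le h1

/-- Key inequality: `det (1 + S + D) ≤ det (1 + S) * det (1 + D)` for `S, D` PSD. -/
private lemma det_one_add_add_le {n : Type*} [Fintype n] [DecidableEq n]
    {S D : Matrix n n ℝ} (hS : S.PosSemidef) (hD : D.PosSemidef) :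
    (1 + S + D).det ≤ (1 + S).det * (1 + D).det := by
  have hT : (1 + S).PosDef := Matrix.PosDef.one.add_posSemidef hS
  set T : Matrix n n ℝ := 1 + S with hTdef
  set R := hT.posSemidef.sqrt with hRdef
  have hu : IsUnit R.det := sqrt_det_isUnit hT
  have hRR : R * R = T := hT.posSemidef.sqrt_mul_self
  have hRH : (R⁻¹).IsHermitian := inv_sqrt_hermitian hT
  -- factor out det T
  have h1 : (T + D).det = T.det * (1 + R⁻¹ * D * R⁻¹).det := det_add_factor hT D
  -- square root of D
  set Q := hD.sqrt with hQdef
  have hQQ : Q * Q = D := hD.sqrt_mul_self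
  have hQH : Q.IsHermitian := hD.posSemidef_sqrt.1
  have hQps : Q.PosSemidef := hD.posSemidef_sqrt
  -- Sylvester
  have hTinv : R⁻¹ * R⁻¹ = T⁻¹ := by
    rw [← Matrix.mul_inv_rev, hRR]
  have h2 : (1 + R⁻¹ * D * R⁻¹).det = (1 + Q * T⁻¹ * Q).det := by
    have : R⁻¹ * D * R⁻¹ = (R⁻¹ * Q) * (Q * R⁻¹) := by
      rw [← hQQ]; simp only [Matrix.mul_assoc]
    rw [this, det_one_add_mul_comm]
    congr 2
    calc Q * R⁻¹ * (R⁻¹ * Q) = Q * (R⁻¹ * R⁻¹) * Q := by simp only [Matrix.mul_assoc]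
      _ = Q * T⁻¹ * Q := by rw [hTinv]
  -- 1 - T⁻¹ is PSD
  have e1 : R⁻¹ * T * R⁻¹ = 1 := by
    rw [← hRR]
    calc R⁻¹ * (R * R) * R⁻¹ = (R⁻¹ * R) * (R * R⁻¹) := by simp only [Matrix.mul_assoc]
      _ = 1 := by rw [nonsing_inv_mul _ hu, mul_nonsing_inv _ hu, one_mul]
  have hTm : (1 : Matrix n n ℝ) - T⁻¹ = R⁻¹ * S * R⁻¹ := by
    have hS' : S = T - 1 := (add_sub_cancel_left 1 S).symm
    have hexp : R⁻¹ * (T - 1) * R⁻¹ = R⁻¹ * T * R⁻¹ - R⁻¹ * R⁻¹ := by noncomm_ring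
    rw [hS', hexp, e1, hTinv]
  have hsub : ((1 : Matrix n n ℝ) - T⁻¹).PosSemidef := by
    rw [hTm]
    have := hS.mul_mul_conjTranspose_same R⁻¹
    rwa [hRH.eq] at this
  -- Z := Q * T⁻¹ * Q and W := Q * (1 - T⁻¹) * Q
  have hZ : (Q * T⁻¹ * Q).PosSemidef := by
    have := (hT.inv.posSemidef).mul_mul_conjTranspose_same Q
    rwa [hQH.eq] at this
  have hW : (Q * (1 - T⁻¹) * Q).PosSemidef := by
    have := hsub.mul_mul_conjTranspose_same Q
    rwa [hQH.eq] at this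
  have hZW : Q * T⁻¹ * Q + Q * (1 - T⁻¹) * Q = D := by
    rw [← hQQ]
    noncomm_ring
  have h3 : (1 + Q * T⁻¹ * Q).det ≤ (1 + D).det := by
    have := det_le_det_add (Matrix.PosDef.one.add_posSemidef hZ) hW
    rwa [add_assoc, hZW] at this
  have h4 : (T + D).det ≤ T.det * (1 + D).det := by
    rw [h1, h2]
    exact mul_le_mul_of_nonneg_left h3 hT.det_pos.le
  simpa [hTdef] using h4

/-- For positive definite `A ⪯ B` and positive semidefinite `D`,
`det(B + D)/det B ≤ det(A + D)/det A`. -/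
theorem det_ratio_antitone {d : ℕ} (A B D : Matrix (Fin d) (Fin d) ℝ)
    (hA : A.PosDef) (hB : B.PosDef) (hBA : (B - A).PosSemidef)
    (hD : D.PosSemidef) :
    (B + D).det * A.det ≤ (A + D).det * B.det ∧
    (B + D).det / B.det ≤ (A + D).det / A.det := by
  set R := hA.posSemidef.sqrt with hRdef
  have hRH : (R⁻¹).IsHermitian := inv_sqrt_hermitian hA
  set S := R⁻¹ * (B - A) * R⁻¹ with hSdef
  set D' := R⁻¹ * D * R⁻¹ with hD'def
  have hS : S.PosSemidef := by
    have := hBA.mul_mul_conjTranspose_same R⁻¹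
    rwa [hRH.eq] at this
  have hD' : D'.PosSemidef := by
    have := hD.mul_mul_conjTranspose_same R⁻¹
    rwa [hRH.eq] at this
  have e1 : (A + D).det = A.det * (1 + D').det := det_add_factor hA D
  have e2 : B.det = A.det * (1 + S).det := by
    have := det_add_factor hA (B - A)
    rwa [add_sub_cancel] at this
  have e3 : (B + D).det = A.det * (1 + S + D').det := by
    have := det_add_factor hA (B - A + D)
    have hBD : A + (B - A + D) = B + D := by abel
    have hdist : R⁻¹ * (B - A + D) * R⁻¹ = S + D' := by
      rw [hSdef, hD'def, Matrix.mul_add, Matrix.add_mul]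
    rw [hBD, hdist, ← add_assoc] at this
    exact this
  have key : (1 + S + D').det ≤ (1 + S).det * (1 + D').det := det_one_add_add_le hS hD'
  have hApos : (0 : ℝ) < A.det := hA.det_pos
  have hBpos : (0 : ℝ) < B.det := hB.det_pos
  have main : (B + D).det * A.det ≤ (A + D).det * B.det := by
    rw [e1, e2, e3]
    nlinarith [sq_nonneg A.det, hApos, key]
  refine ⟨main, ?_⟩
  rw [div_le_div_iff₀ hBpos hApos]
  exact main
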